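/- Suppose $l_1 < 0$ and $k_0 > 0$. Then for every real value of $l_0$, the quantity $G = (-k_0+3l_1^2)^3 - 27(-l_1(k_0+l_1^2)+l_0^2)^2$ is negative; hence the quartic $R(x) = -x^4 + 6l_1x^2 + 4l_0x + k_0$ has exactly two real roots and two (nonreal) complex conjugate roots. -/

import Mathlib

/-- Existence of a real factorization of the depressed quartic
`x^4 + p x^2 + q x + r = (x^2 + α x + β)(x^2 - α x + γ)`. -/
lemma stmt_17_resolvent (p q r : ℝ) (hp : 0 < p) (hr : r < 0) :
    ∃ α β γ : ℝ, β + γ = p + α ^ 2 ∧ α * (γ - β) = q ∧ β * γ = r := by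
  rcases eq_or_ne q 0 with hq | hq
  · -- biquadratic case
    have hdisc : 0 ≤ p ^ 2 - 4 * r := by nlinarith
    have hs : Real.sqrt (p ^ 2 - 4 * r) ^ 2 = p ^ 2 - 4 * r := Real.sq_sqrt hdisc
    refine ⟨0, (p - Real.sqrt (p ^ 2 - 4 * r)) / 2, (p + Real.sqrt (p ^ 2 - 4 * r)) / 2,
      by ring, by rw [hq]; ring, ?_⟩
    linear_combination (-1 / 4 : ℝ) * hs
  · -- use a positive root of the resolvent cubic
    set f : ℝ → ℝ := fun y => y ^ 3 + 2 * p * y ^ 2 + (p ^ 2 - 4 * r) * y - q ^ 2 with hf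
    have hc : Continuous f := by fun_prop
    have hpr : 0 < p ^ 2 - 4 * r := by nlinarith
    set Y : ℝ := q ^ 2 / (p ^ 2 - 4 * r) + 1 with hY
    have hYpos : 0 < Y := by positivity
    have hfY : 0 < f Y := by
      have h1 : (p ^ 2 - 4 * r) * Y - q ^ 2 = p ^ 2 - 4 * r := by
        rw [hY]; field_simp; ring
      have h2 : 0 < Y ^ 3 + 2 * p * Y ^ 2 := by positivity
      simp only [hf]
      nlinarith
    have hf0 : f 0 < 0 := by
      simp only [hf]
      have : q ^ 2 > 0 := by positivity
      nlinarith
    have hsub := intermediate_value_Icc (le_of_lt hYpos) hc.continuousOn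
    have h0mem : (0 : ℝ) ∈ Set.Icc (f 0) (f Y) := ⟨le_of_lt hf0, le_of_lt hfY⟩
    obtain ⟨y, hymem, hyroot⟩ := hsub h0mem
    have hypos : 0 < y := by
      rcases lt_or_eq_of_le hymem.1 with h | h
      · exact h
      · exfalso; rw [← h] at hyroot; rw [hyroot] at hf0; exact lt_irrefl 0 hf0
    have hα : Real.sqrt y = Real.sqrt y := rfl
    set α : ℝ := Real.sqrt y with hαdef
    have hαpos : 0 < α := Real.sqrt_pos.mpr hypos
    have hα2 : α ^ 2 = y := Real.sq_sqrt (le_of_lt hypos)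
    have hαne : α ≠ 0 := ne_of_gt hαpos
    refine ⟨α, (p + y) / 2 - q / (2 * α), (p + y) / 2 + q / (2 * α), ?_, ?_, ?_⟩
    · rw [← hα2]; ring
    · field_simp; ring
    · have hres : y ^ 3 + 2 * p * y ^ 2 + (p ^ 2 - 4 * r) * y - q ^ 2 = 0 := hyroot
      have hyne : y ≠ 0 := ne_of_gt hypos
      field_simp
      rw [← hα2] at hres
      linear_combination hres + (-2 * p * α ^ 2 - α ^ 2 * (y + α ^ 2)) * hα2

theorem stmt_17 (l₁ k₀ : ℝ) (hl₁ : l₁ < 0) (hk₀ : 0 < k₀) (l₀ : ℝ) :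
    (-k₀ + 3 * l₁ ^ 2) ^ 3 - 27 * (-(l₁ * (k₀ + l₁ ^ 2)) + l₀ ^ 2) ^ 2 < 0 ∧
    ∃ (x₁ x₂ : ℝ) (z : ℂ), x₁ ≠ x₂ ∧ z.im ≠ 0 ∧
      ∀ w : ℂ, -w ^ 4 + 6 * (l₁ : ℂ) * w ^ 2 + 4 * (l₀ : ℂ) * w + (k₀ : ℂ) = 0
        ↔ w = (x₁ : ℂ) ∨ w = (x₂ : ℂ) ∨ w = z ∨ w = (starRingEnd ℂ) z := by
  constructor
  · -- the invariant inequality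
    have hc : 0 < -(l₁ * (k₀ + l₁ ^ 2)) := by nlinarith
    nlinarith [sq_nonneg l₀, sq_nonneg (l₀ ^ 2), hc, mul_nonneg (sq_nonneg l₀) (le_of_lt hc),
      sq_nonneg l₁, sq_nonneg (l₁ ^ 2), mul_pos hc hc, sq_nonneg (l₀ * l₁),
      mul_pos hk₀ hk₀, mul_pos (mul_pos hk₀ hk₀) hk₀, sq_nonneg (l₀ ^ 2 - l₁ * (k₀ + l₁ ^ 2))]
  · -- the root structure
    obtain ⟨α₀, β₀, γ₀, hbc₀, habc₀, hbg₀⟩ :=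
      stmt_17_resolvent (-6 * l₁) (-4 * l₀) (-k₀) (by linarith) (by linarith)
    -- arrange β ≤ γ (possibly swapping the two quadratic factors)
    obtain ⟨α, β, γ, hbc, habc, hbg, hle⟩ :
        ∃ α β γ : ℝ, β + γ = -6 * l₁ + α ^ 2 ∧ α * (γ - β) = -4 * l₀ ∧ β * γ = -k₀ ∧ β ≤ γ := by
      rcases le_total β₀ γ₀ with h | h
      · exact ⟨α₀, β₀, γ₀, hbc₀, habc₀, hbg₀, h⟩
      · exact ⟨-α₀, γ₀, β₀, by nlinarith [hbc₀], by nlinarith [habc₀], by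
          nlinarith [hbg₀], h⟩
    -- discriminants of the two quadratic factors
    have hprod : (α ^ 2 - 4 * β) * (α ^ 2 - 4 * γ) < 0 := by
      nlinarith [sq_nonneg α, sq_nonneg (α ^ 2), hbc, hbg]
    have hD : 0 < α ^ 2 - 4 * β := by nlinarith
    have hE : 0 < 4 * γ - α ^ 2 := by nlinarith
    set t : ℝ := Real.sqrt (α ^ 2 - 4 * β) with htdef
    set s : ℝ := Real.sqrt (4 * γ - α ^ 2) with hsdef
    have htpos : 0 < t := Real.sqrt_pos.mpr hD
    have hspos : 0 < s := Real.sqrt_pos.mpr hE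
    have ht2 : t ^ 2 = α ^ 2 - 4 * β := Real.sq_sqrt (le_of_lt hD)
    have hs2 : s ^ 2 = 4 * γ - α ^ 2 := Real.sq_sqrt (le_of_lt hE)
    refine ⟨(-α + t) / 2, (-α - t) / 2, (α / 2 : ℝ) + (s / 2 : ℝ) * Complex.I, ?_, ?_, ?_⟩
    · intro h
      linarith
    · simp [Complex.add_im, Complex.mul_im]
      linarith
    · intro w
      set z : ℂ := (α / 2 : ℝ) + (s / 2 : ℝ) * Complex.I with hz
      have hconj : (starRingEnd ℂ) z = ((α / 2 : ℝ) : ℂ) - ((s / 2 : ℝ) : ℂ) * Complex.I := by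
        rw [hz, map_add, map_mul, Complex.conj_ofReal, Complex.conj_ofReal, Complex.conj_I]
        ring
      have h1 : (((-α + t) / 2 : ℝ) : ℂ) + (((-α - t) / 2 : ℝ) : ℂ) = -(α : ℂ) := by
        push_cast; ring
      have h2 : (((-α + t) / 2 : ℝ) : ℂ) * (((-α - t) / 2 : ℝ) : ℂ) = (β : ℝ) := by
        have : ((-α + t) / 2 : ℝ) * ((-α - t) / 2 : ℝ) = β := by
          linear_combination (-1 / 4 : ℝ) * ht2
        push_cast [← this]; ring
      have h3 : z + (starRingEnd ℂ) z = (α : ℂ) := by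
        rw [hconj, hz]; push_cast; ring
      have h4 : z * (starRingEnd ℂ) z = (γ : ℂ) := by
        rw [hconj, hz]
        have : (Complex.I : ℂ) ^ 2 = -1 := Complex.I_sq
        have hsc : ((s : ℝ) : ℂ) ^ 2 = ((4 * γ - α ^ 2 : ℝ) : ℂ) := by
          exact_mod_cast congrArg (fun x : ℝ => ((x : ℂ))) hs2
        push_cast at hsc ⊢
        linear_combination (-1 / 4 : ℂ) * this * ((s:ℂ))^2 + (1/4 : ℂ) * hsc - (1/4 : ℂ) * hsc * 0
      have h5 : (β : ℂ) + (γ : ℂ) = (α : ℂ) ^ 2 - 6 * (l₁ : ℂ) := by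
        have : β + γ = α ^ 2 - 6 * l₁ := by linarith
        exact_mod_cast this
      have h6 : (α : ℂ) * ((γ : ℂ) - (β : ℂ)) = -4 * (l₀ : ℂ) := by
        exact_mod_cast habc
      have h7 : (β : ℂ) * (γ : ℂ) = -(k₀ : ℂ) := by
        exact_mod_cast hbg
      have e1 : (w - (((-α + t) / 2 : ℝ) : ℂ)) * (w - (((-α - t) / 2 : ℝ) : ℂ)) =
          w ^ 2 + (α : ℂ) * w + (β : ℂ) := by
        linear_combination (-w) * h1 + h2
      have e2 : (w - z) * (w - (starRingEnd ℂ) z) = w ^ 2 - (α : ℂ) * w + (γ : ℂ) := by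
        linear_combination (-w) * h3 + h4
      have e3 : -((w ^ 2 + (α : ℂ) * w + (β : ℂ)) * (w ^ 2 - (α : ℂ) * w + (γ : ℂ))) =
          -w ^ 4 + 6 * (l₁ : ℂ) * w ^ 2 + 4 * (l₀ : ℂ) * w + (k₀ : ℂ) := by
        linear_combination (-w ^ 2) * h5 + (-w) * h6 + (-1 : ℂ) * h7
      have hid : -w ^ 4 + 6 * (l₁ : ℂ) * w ^ 2 + 4 * (l₀ : ℂ) * w + (k₀ : ℂ) =
          -((w - (((-α + t) / 2 : ℝ) : ℂ)) * (w - (((-α - t) / 2 : ℝ) : ℂ)) *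
            ((w - z) * (w - (starRingEnd ℂ) z))) := by
        rw [e1, e2, e3]
      rw [hid, neg_eq_zero]
      simp only [mul_eq_zero, sub_eq_zero]
      tauto
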